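/- Let H be a finite set, and s : X^n × H → ℝ a score function of sensitivity at most Δ (i.e., |s(X,h) − s(X',h)| ≤ Δ for all h and all neighboring X, X'). The exponential mechanism, which outputs h with probability proportional to exp(ε·s(X,h)/(2Δ)), is (ε, 0)-differentially private. -/

import Mathlib

open scoped Classical

/-- Output probability of the exponential mechanism with score s, sensitivity
parameter Δ and privacy parameter ε, on dataset X, at object h. -/
noncomputable def expMechProb {𝒳 H : Type*} [Fintype H] {n : ℕ}
    (s : (Fin n → 𝒳) → H → ℝ) (Δ ε : ℝ) (X : Fin n → 𝒳) (h : H) : ℝ :=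
  Real.exp (ε * s X h / (2 * Δ)) / ∑ h' : H, Real.exp (ε * s X h' / (2 * Δ))

/-- the exponential mechanism is (ε, 0)-differentially private. -/
theorem exponential_mechanism_is_DP
    {𝒳 H : Type*} [Fintype H] [Nonempty H] (n : ℕ)
    (s : (Fin n → 𝒳) → H → ℝ) (Δ ε : ℝ) (hΔ : 0 < Δ) (hε : 0 ≤ ε)
    (hsens : ∀ (h : H) (X X' : Fin n → 𝒳),
      (Finset.univ.filter fun i => X i ≠ X' i).card ≤ 1 →
      |s X h - s X' h| ≤ Δ) :
    ∀ X X' : Fin n → 𝒳,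
      (Finset.univ.filter fun i => X i ≠ X' i).card ≤ 1 →
      ∀ S : Finset H,
        ∑ h ∈ S, expMechProb s Δ ε X h ≤
          Real.exp ε * ∑ h ∈ S, expMechProb s Δ ε X' h := by
  intro X X' hnb S
  rw [Finset.mul_sum]
  apply Finset.sum_le_sum
  intro h _
  -- pointwise bound
  set a : H → ℝ := fun h => Real.exp (ε * s X h / (2 * Δ)) with ha
  set b : H → ℝ := fun h => Real.exp (ε * s X' h / (2 * Δ)) with hb
  have key : ∀ g : H, a g ≤ Real.exp (ε / 2) * b g := by
    intro g
    rw [← Real.exp_add]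
    apply Real.exp_le_exp.mpr
    have hs := hsens g X X' hnb
    have : ε * s X g / (2 * Δ) - ε * s X' g / (2 * Δ) ≤ ε / 2 := by
      rw [div_sub_div_same, ← mul_sub]
      rw [div_le_div_iff₀ (by linarith) (by norm_num)]
      have h1 : s X g - s X' g ≤ Δ := (abs_le.mp hs).2
      nlinarith [mul_le_mul_of_nonneg_left h1 hε]
    linarith
  have key' : ∀ g : H, b g ≤ Real.exp (ε / 2) * a g := by
    intro g
    rw [← Real.exp_add]
    apply Real.exp_le_exp.mpr
    have hs := hsens g X X' hnb
    have : ε * s X' g / (2 * Δ) - ε * s X g / (2 * Δ) ≤ ε / 2 := by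
      rw [div_sub_div_same, ← mul_sub]
      rw [div_le_div_iff₀ (by linarith) (by norm_num)]
      have h1 : s X' g - s X g ≤ Δ := by
        have := (abs_le.mp hs).1; linarith
      nlinarith [mul_le_mul_of_nonneg_left h1 hε]
    linarith
  have hsa : 0 < ∑ h' : H, a h' :=
    Finset.sum_pos (fun g _ => Real.exp_pos _) Finset.univ_nonempty
  have hsb : 0 < ∑ h' : H, b h' :=
    Finset.sum_pos (fun g _ => Real.exp_pos _) Finset.univ_nonempty
  have hsum : (∑ h' : H, b h') ≤ Real.exp (ε / 2) * ∑ h' : H, a h' := by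
    rw [Finset.mul_sum]
    exact Finset.sum_le_sum fun g _ => key' g
  show a h / (∑ h' : H, a h') ≤ Real.exp ε * (b h / (∑ h' : H, b h'))
  rw [mul_div_assoc', div_le_div_iff₀ hsa hsb]
  calc a h * ∑ h' : H, b h'
      ≤ (Real.exp (ε / 2) * b h) * (Real.exp (ε / 2) * ∑ h' : H, a h') := by
        apply mul_le_mul (key h) hsum (le_of_lt hsb)
        positivity
    _ = Real.exp ε * b h * ∑ h' : H, a h' := by
        rw [mul_mul_mul_comm, ← Real.exp_add, add_halves, mul_assoc]
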